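/- For every m ∈ ℕ, every eigenvalue of the (m+1)×(m+1) principal finite section M(0:m,0:m) of the mass matrix M is strictly greater than 1/(2(m+1)(m+2)); equivalently, the real symmetric matrix M(0:m,0:m) − (1/(2(m+1)(m+2)))·I is positive definite. In particular every principal finite section of M is positive definite. -/

import Mathlib

/-- The symmetric pentadiagonal mass matrix `M` with
`M(n,n) = 2(n+1)(n+2)/((2n+1)(2n+5))` and
`M(n,n+2) = M(n+2,n) = -√((n+1)(n+2)(n+3)(n+4)/((2n+3)(2n+5)²(2n+7)))`. -/
noncomputable def Mmat (i j : ℕ) : ℝ :=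
  if i = j then 2 * ((i : ℝ) + 1) * ((i : ℝ) + 2) / ((2 * (i : ℝ) + 1) * (2 * (i : ℝ) + 5))
  else if i + 2 = j then
    -Real.sqrt (((i : ℝ) + 1) * ((i : ℝ) + 2) * ((i : ℝ) + 3) * ((i : ℝ) + 4) /
      ((2 * (i : ℝ) + 3) * (2 * (i : ℝ) + 5) ^ 2 * (2 * (i : ℝ) + 7)))
  else if j + 2 = i then
    -Real.sqrt (((j : ℝ) + 1) * ((j : ℝ) + 2) * ((j : ℝ) + 3) * ((j : ℝ) + 4) /
      ((2 * (j : ℝ) + 3) * (2 * (j : ℝ) + 5) ^ 2 * (2 * (j : ℝ) + 7)))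
  else 0

/-- The `(m+1) × (m+1)` principal finite section `M(0:m,0:m)` of the mass matrix. -/
noncomputable def Msec (m : ℕ) : Matrix (Fin (m + 1)) (Fin (m + 1)) ℝ :=
  Matrix.of fun i j => Mmat (i : ℕ) (j : ℕ)

open scoped Matrix

section MassAuxLemmas

noncomputable def bOff (t : ℕ) : ℝ :=
  Real.sqrt (((t : ℝ) + 1) * ((t : ℝ) + 2) * ((t : ℝ) + 3) * ((t : ℝ) + 4) /
      ((2 * (t : ℝ) + 3) * (2 * (t : ℝ) + 5) ^ 2 * (2 * (t : ℝ) + 7)))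

noncomputable def pf (x : ℝ) : ℝ := (x + 1) * (x + 2) / ((2 * x + 3) * (2 * x + 5))
noncomputable def qf (x : ℝ) : ℝ := (x + 3) * (x + 4) / ((2 * x + 5) * (2 * x + 7))

lemma bOff_nonneg (t : ℕ) : 0 ≤ bOff t := Real.sqrt_nonneg _

lemma bOff_le (t : ℕ) : bOff t ≤ (pf (t : ℝ) + qf (t : ℝ)) / 2 := by
  set x : ℝ := (t : ℝ) with hxdef
  have hx : (0:ℝ) ≤ x := Nat.cast_nonneg t
  have h1 : (0:ℝ) < 2*x+3 := by linarith
  have h2 : (0:ℝ) < 2*x+5 := by linarith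
  have h3 : (0:ℝ) < 2*x+7 := by linarith
  have hp : 0 ≤ pf x := by unfold pf; positivity
  have hq : 0 ≤ qf x := by unfold qf; positivity
  have hrad : (x + 1) * (x + 2) * (x + 3) * (x + 4) /
      ((2 * x + 3) * (2 * x + 5) ^ 2 * (2 * x + 7)) = pf x * qf x := by
    unfold pf qf
    field_simp
  rw [bOff, ← hxdef, hrad]
  have hle : pf x * qf x ≤ ((pf x + qf x) / 2) ^ 2 := by nlinarith [sq_nonneg (pf x - qf x)]
  calc Real.sqrt (pf x * qf x) ≤ Real.sqrt (((pf x + qf x)/2)^2) := Real.sqrt_le_sqrt hle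
    _ = (pf x + qf x)/2 := Real.sqrt_sq (by positivity)

lemma key1 (x : ℝ) (hx : 0 ≤ x) :
    1 / (2 * (x + 1) * (x + 2)) + (pf x + qf x) / 2
      < 2 * (x + 1) * (x + 2) / ((2 * x + 1) * (2 * x + 5)) := by
  have d1 : (0:ℝ) < x + 1 := by linarith
  have d2 : (0:ℝ) < x + 2 := by linarith
  have d3 : (0:ℝ) < 2*x + 1 := by linarith
  have d4 : (0:ℝ) < 2*x + 3 := by linarith
  have d5 : (0:ℝ) < 2*x + 5 := by linarith
  have d6 : (0:ℝ) < 2*x + 7 := by linarith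
  have key : 2 * (x + 1) * (x + 2) / ((2 * x + 1) * (2 * x + 5))
      - (1 / (2 * (x + 1) * (x + 2)) + (pf x + qf x) / 2)
      = (8*x^6 + 88*x^5 + 378*x^4 + 800*x^3 + 872*x^2 + 486*x + 131) /
        (2 * ((x+1) * ((x+2) * ((2*x+1) * ((2*x+3) * ((2*x+5) * (2*x+7))))))) := by
    unfold pf qf
    field_simp
    ring
  have hnum : (0:ℝ) < 8*x^6 + 88*x^5 + 378*x^4 + 800*x^3 + 872*x^2 + 486*x + 131 := by
    have e6 : 0 ≤ x^6 := by positivity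
    have e5 : 0 ≤ x^5 := by positivity
    have e4 : 0 ≤ x^4 := by positivity
    have e3 : 0 ≤ x^3 := by positivity
    have e2 : 0 ≤ x^2 := by positivity
    linarith
  have hden : (0:ℝ) < 2 * ((x+1) * ((x+2) * ((2*x+1) * ((2*x+3) * ((2*x+5) * (2*x+7)))))) := by
    positivity
  have := div_pos hnum hden
  linarith

lemma key2 (x : ℝ) (hx : 2 ≤ x) :
    1 / (2 * (x + 1) * (x + 2)) + ((pf (x-2) + qf (x-2)) / 2 + (pf x + qf x) / 2)
      < 2 * (x + 1) * (x + 2) / ((2 * x + 1) * (2 * x + 5)) := by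
  have d1 : (0:ℝ) < x + 1 := by linarith
  have d2 : (0:ℝ) < x + 2 := by linarith
  have d3 : (0:ℝ) < 2*x + 1 := by linarith
  have d4 : (0:ℝ) < 2*x + 3 := by linarith
  have d5 : (0:ℝ) < 2*x + 5 := by linarith
  have d6 : (0:ℝ) < 2*x + 7 := by linarith
  have d7 : (0:ℝ) < 2*(x-2) + 3 := by linarith
  have d8 : (0:ℝ) < 2*(x-2) + 5 := by linarith
  have d9 : (0:ℝ) < 2*(x-2) + 7 := by linarith
  have n1 : (x+1) ≠ 0 := ne_of_gt d1
  have n2 : (x+2) ≠ 0 := ne_of_gt d2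
  have n3 : (2*x+1) ≠ 0 := ne_of_gt d3
  have n4 : (2*x+3) ≠ 0 := ne_of_gt d4
  have n5 : (2*x+5) ≠ 0 := ne_of_gt d5
  have n6 : (2*x+7) ≠ 0 := ne_of_gt d6
  have n7 : (2*(x-2)+3) ≠ 0 := ne_of_gt d7
  have n8 : (2*(x-2)+5) ≠ 0 := ne_of_gt d8
  have n9 : (2*(x-2)+7) ≠ 0 := ne_of_gt d9
  have d0 : (0:ℝ) < 2*x-1 := by linarith
  have n0 : (2*x-1) ≠ 0 := ne_of_gt d0
  have key : 2 * (x + 1) * (x + 2) / ((2 * x + 1) * (2 * x + 5))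
      - (1 / (2 * (x + 1) * (x + 2)) + ((pf (x-2) + qf (x-2)) / 2 + (pf x + qf x) / 2))
      = (48*x^3 + 216*x^2 + 222*x + 9) /
        (2 * ((x+1) * ((x+2) * ((2*x-1) * ((2*x+1) * ((2*x+3) * ((2*x+5) * (2*x+7)))))))) := by
    unfold pf qf
    field_simp
    ring
  have hnum : (0:ℝ) < 48*x^3 + 216*x^2 + 222*x + 9 := by nlinarith
  have hden : (0:ℝ) < 2 * ((x+1) * ((x+2) * ((2*x-1) * ((2*x+1) * ((2*x+3) * ((2*x+5) * (2*x+7))))))) := by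
    have : (0:ℝ) < 2*x - 1 := by linarith
    positivity
  have := div_pos hnum hden
  linarith


lemma Mmat_symm (i j : ℕ) : Mmat i j = Mmat j i := by
  unfold Mmat
  split_ifs <;> first | rfl | omega | (rename_i h _; subst h; rfl) | (rename_i h; omega)

lemma sum_ite_coe_le {N c : ℕ} {v : ℝ} (hv : 0 ≤ v) :
    (∑ j : Fin N, if (j : ℕ) = c then v else 0) ≤ v := by
  by_cases hc : c < N
  · have heq : ∀ j : Fin N, ((j : ℕ) = c) ↔ (j = ⟨c, hc⟩) := by
      intro j; simp [Fin.ext_iff]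
    simp_rw [heq]
    simp [Finset.sum_ite_eq']
  · have hfalse : ∀ j : Fin N, ¬((j : ℕ) = c) := by
      intro j h; exact hc (h ▸ j.isLt)
    simp [hfalse, hv]

lemma norm_Mmat_le (n jn : ℕ) (hne : n ≠ jn) :
    ‖Mmat n jn‖ ≤ (if n + 2 = jn then bOff n else 0) + (if jn + 2 = n then bOff (n - 2) else 0) := by
  rw [Mmat, if_neg hne]
  by_cases h2 : n + 2 = jn
  · rw [if_pos h2, if_pos h2, if_neg (by omega : ¬ jn + 2 = n), add_zero,
      norm_neg, Real.norm_eq_abs, abs_of_nonneg (Real.sqrt_nonneg _)]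
    exact le_of_eq rfl
  · rw [if_neg h2, if_neg h2]
    by_cases h3 : jn + 2 = n
    · rw [if_pos h3, if_pos h3, zero_add]
      have hj : jn = n - 2 := by omega
      rw [hj, norm_neg, Real.norm_eq_abs, abs_of_nonneg (Real.sqrt_nonneg _)]
      exact le_of_eq rfl
    · rw [if_neg h3, if_neg h3]
      simp


lemma row_lt (m : ℕ) (k : Fin (m + 1)) :
    1 / (2 * ((m : ℝ) + 1) * ((m : ℝ) + 2)) + ∑ j ∈ Finset.univ.erase k, ‖Msec m k j‖
      < Msec m k k := by
  set n : ℕ := (k : ℕ) with hn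
  have hnm : n ≤ m := by have := k.isLt; omega
  have hdiag : Msec m k k = 2 * ((n : ℝ) + 1) * ((n : ℝ) + 2) / ((2 * (n : ℝ) + 1) * (2 * (n : ℝ) + 5)) := by
    simp [Msec, Mmat]
    rfl
  have hsum : ∑ j ∈ Finset.univ.erase k, ‖Msec m k j‖
      ≤ bOff n + (if 2 ≤ n then bOff (n - 2) else 0) := by
    have hstep1 : ∑ j ∈ Finset.univ.erase k, ‖Msec m k j‖ ≤
        ∑ j ∈ Finset.univ.erase k,
          ((if n + 2 = (j : ℕ) then bOff n else 0) + (if (j : ℕ) + 2 = n then bOff (n - 2) else 0)) := by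
      apply Finset.sum_le_sum
      intro j hj
      have hjk : n ≠ (j : ℕ) := by
        intro h
        exact (Finset.mem_erase.mp hj).1 (Fin.ext h.symm)
      exact norm_Mmat_le n (j : ℕ) hjk
    have hstep2 : ∑ j ∈ Finset.univ.erase k,
          ((if n + 2 = (j : ℕ) then bOff n else 0) + (if (j : ℕ) + 2 = n then bOff (n - 2) else 0))
        ≤ ∑ j : Fin (m + 1),
          ((if n + 2 = (j : ℕ) then bOff n else 0) + (if (j : ℕ) + 2 = n then bOff (n - 2) else 0)) := by
      apply Finset.sum_le_sum_of_subset_of_nonneg (Finset.erase_subset _ _)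
      intro j _ _
      have := bOff_nonneg n
      have := bOff_nonneg (n - 2)
      positivity
    have hsplit : ∑ j : Fin (m + 1),
          ((if n + 2 = (j : ℕ) then bOff n else 0) + (if (j : ℕ) + 2 = n then bOff (n - 2) else 0))
        = (∑ j : Fin (m + 1), if n + 2 = (j : ℕ) then bOff n else 0)
          + ∑ j : Fin (m + 1), if (j : ℕ) + 2 = n then bOff (n - 2) else 0 :=
      Finset.sum_add_distrib
    have hs1 : (∑ j : Fin (m + 1), if n + 2 = (j : ℕ) then bOff n else 0) ≤ bOff n := by
      have : ∀ j : Fin (m + 1), (n + 2 = (j : ℕ)) ↔ ((j : ℕ) = n + 2) := fun j => eq_comm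
      simp_rw [this]
      exact sum_ite_coe_le (bOff_nonneg n)
    have hs2 : (∑ j : Fin (m + 1), if (j : ℕ) + 2 = n then bOff (n - 2) else 0)
        ≤ (if 2 ≤ n then bOff (n - 2) else 0) := by
      by_cases h2n : 2 ≤ n
      · rw [if_pos h2n]
        have : ∀ j : Fin (m + 1), ((j : ℕ) + 2 = n) ↔ ((j : ℕ) = n - 2) := fun j => by omega
        simp_rw [this]
        exact sum_ite_coe_le (bOff_nonneg (n - 2))
      · rw [if_neg h2n]
        have : ∀ j : Fin (m + 1), ¬((j : ℕ) + 2 = n) := fun j => by omega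
        simp [this]
    calc _ ≤ _ := hstep1
      _ ≤ _ := hstep2
      _ = _ := hsplit
      _ ≤ _ := add_le_add hs1 hs2
  have hmono : 1 / (2 * ((m : ℝ) + 1) * ((m : ℝ) + 2)) ≤ 1 / (2 * ((n : ℝ) + 1) * ((n : ℝ) + 2)) := by
    have hcast : (n : ℝ) ≤ (m : ℝ) := Nat.cast_le.mpr hnm
    have h0 : (0:ℝ) ≤ (n : ℝ) := Nat.cast_nonneg n
    apply one_div_le_one_div_of_le
    · positivity
    · nlinarith
  have hb1 := bOff_le n
  rw [hdiag]
  by_cases h2n : 2 ≤ n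
  · have hb2 : bOff (n - 2) ≤ (pf ((n : ℝ) - 2) + qf ((n : ℝ) - 2)) / 2 := by
      have hc : ((n - 2 : ℕ) : ℝ) = (n : ℝ) - 2 := by
        rw [Nat.cast_sub h2n]; norm_num
      have := bOff_le (n - 2)
      rwa [hc] at this
    have hx2 : (2:ℝ) ≤ (n : ℝ) := by exact_mod_cast h2n
    have hkey := key2 (n : ℝ) hx2
    rw [if_pos h2n] at hsum
    linarith
  · have hkey := key1 (n : ℝ) (Nat.cast_nonneg n)
    rw [if_neg h2n] at hsum
    linarith

lemma eig_lb (m : ℕ) {μ : ℝ} (hμ : Module.End.HasEigenvalue (Matrix.toLin' (Msec m)) μ) :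
    1 / (2 * ((m : ℝ) + 1) * ((m : ℝ) + 2)) < μ := by
  obtain ⟨k, hk⟩ := eigenvalue_mem_ball hμ
  rw [Metric.mem_closedBall, Real.dist_eq] at hk
  have h1 := (abs_le.mp hk).1
  have hrow := row_lt m k
  linarith

lemma posDef_of_eigs {n' : Type*} [Fintype n'] [DecidableEq n'] {B : Matrix n' n' ℝ}
    (hB : B.IsHermitian) (h : ∀ i, 0 < hB.eigenvalues i) : B.PosDef := by
  exact hB.posDef_iff_eigenvalues_pos.mpr h

lemma msec'_isHermitian (m : ℕ) : (Msec m).IsHermitian := by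
  ext i j
  simp only [Matrix.conjTranspose_apply, Msec, Matrix.of_apply, star_trivial]
  exact Mmat_symm (j : ℕ) (i : ℕ)


end MassAuxLemmas

theorem mass_section_eigenvalue_lower_bound (m : ℕ) :
    (∀ μ : ℝ, Module.End.HasEigenvalue (Matrix.toLin' (Msec m)) μ →
      1 / (2 * ((m : ℝ) + 1) * ((m : ℝ) + 2)) < μ) ∧
    Matrix.PosDef (Msec m - (1 / (2 * ((m : ℝ) + 1) * ((m : ℝ) + 2))) • (1 : Matrix (Fin (m + 1)) (Fin (m + 1)) ℝ)) ∧
    Matrix.PosDef (Msec m) := by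
  set lam : ℝ := 1 / (2 * ((m : ℝ) + 1) * ((m : ℝ) + 2)) with hlam
  have part1 : ∀ μ : ℝ, Module.End.HasEigenvalue (Matrix.toLin' (Msec m)) μ → lam < μ :=
    fun μ h => eig_lb m h
  have hlampos : 0 < lam := by rw [hlam]; positivity
  set B : Matrix (Fin (m + 1)) (Fin (m + 1)) ℝ := Msec m - lam • 1 with hB
  have hMh := msec'_isHermitian m
  have hBh : B.IsHermitian := by
    have h1 : Bᴴ = B := by
      rw [hB, Matrix.conjTranspose_sub, Matrix.conjTranspose_smul, Matrix.conjTranspose_one,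
        hMh.eq, star_trivial]
    exact h1
  have heigpos : ∀ i, 0 < hBh.eigenvalues i := by
    intro i
    set ν := hBh.eigenvalues i with hν
    have hmem : ν ∈ spectrum ℝ B := hBh.eigenvalues_mem_spectrum_real i
    have hmem2 : ν + lam ∈ spectrum ℝ (Msec m) := by
      rw [spectrum.mem_iff] at hmem ⊢
      intro hcontra
      apply hmem
      convert hcontra using 1
      rw [Algebra.algebraMap_eq_smul_one, Algebra.algebraMap_eq_smul_one, hB, add_smul]
      abel
    have hev : Module.End.HasEigenvalue (Matrix.toLin' (Msec m)) (ν + lam) := by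
      have heq : (Matrix.toLinAlgEquiv' (Msec m) : (Fin (m+1) → ℝ) →ₗ[ℝ] (Fin (m+1) → ℝ))
          = Matrix.toLin' (Msec m) := rfl
      rw [← heq, Module.End.hasEigenvalue_iff_mem_spectrum,
        AlgEquiv.spectrum_eq Matrix.toLinAlgEquiv']
      exact hmem2
    have := part1 _ hev
    linarith
  have hBpd : B.PosDef := posDef_of_eigs hBh heigpos
  have hMpd : (Msec m).PosDef := by
    have hrw : Msec m = B + lam • 1 := by rw [hB]; abel
    rw [hrw]
    apply hBpd.add
    have hdg : lam • (1 : Matrix (Fin (m + 1)) (Fin (m + 1)) ℝ)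
        = Matrix.diagonal (fun _ => lam) := by
      ext i j
      by_cases h : i = j <;> simp [Matrix.one_apply, Matrix.diagonal, h]
    rw [hdg]
    exact Matrix.PosDef.diagonal (fun _ => hlampos)
  exact ⟨part1, hBpd, hMpd⟩
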